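/- In the partial suppression setup, if x and y are distinct items of I belonging to two different parts I_i ≠ I_j of the partition, and x and y lie in the same ghost record (both in L₁, or both in L₂), then s({x, y}, R') = s({x, y}, R) − 1. -/

import Mathlib

variable {α : Type*} [DecidableEq α]

/-- Support of an itemset `I` in a record chunk `R`: the number of records
of `R`, counted with multiplicity, that are supersets of `I`. -/
def supp (I : Finset α) (R : Multiset (Finset α)) : ℕ :=
  (R.filter fun r => I ⊆ r).card

theorem partial_suppression_pair_diff_parts_same_ghost
    (I : Finset α) (hI : 2 ≤ I.card)
    (c : ℕ) (hc : c = (I.card + 1) / 2)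
    (P : Fin c → Finset α)
    (hPdisj : ∀ i j : Fin c, i ≠ j → Disjoint (P i) (P j))
    (hPne : ∀ i : Fin c, (P i).Nonempty)
    (hPcard : ∀ i : Fin c, (P i).card ≤ 2)
    (hPunion : Finset.univ.biUnion P = I)
    (L₁ L₂ : Finset α)
    (hLunion : L₁ ∪ L₂ = I) (hLdisj : L₁ ∩ L₂ = ∅)
    (hsplit : ∀ i : Fin c, (P i).card = 2 →
      (P i ∩ L₁).card = 1 ∧ (P i ∩ L₂).card = 1)
    (R : Multiset (Finset α))
    (hR : c • ({I} : Multiset (Finset α)) ≤ R)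
    (R' : Multiset (Finset α))
    (hR' : R' = (R - c • ({I} : Multiset (Finset α)))
      + (Finset.univ.val.map fun i : Fin c => I \ P i)
      + {L₁, L₂})
    (x y : α) (hxI : x ∈ I) (hyI : y ∈ I) (hxy : x ≠ y)
    (i j : Fin c) (hij : i ≠ j) (hx : x ∈ P i) (hy : y ∈ P j)
    (hghost : (x ∈ L₁ ∧ y ∈ L₁) ∨ (x ∈ L₂ ∧ y ∈ L₂)) :
    supp {x, y} R' = supp {x, y} R - 1 := by
  have hsubI : ({x, y} : Finset α) ⊆ I := by
    intro a ha; simp at ha; rcases ha with h | h <;> subst h <;> assumption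
  -- supp is additive
  have hadd : ∀ (A B : Multiset (Finset α)), supp {x,y} (A + B) = supp {x,y} A + supp {x,y} B := by
    intro A B; simp [supp, Multiset.filter_add]
  -- supp of c copies of I
  have hcopies : supp {x,y} (c • ({I} : Multiset (Finset α))) = c := by
    rw [supp, Multiset.nsmul_singleton,
      Multiset.filter_eq_self.mpr
        (fun r hr => by rw [Multiset.eq_of_mem_replicate hr]; exact hsubI),
      Multiset.card_replicate]
  -- decompose R
  have hRdec : supp {x,y} R = supp {x,y} (R - c • ({I} : Multiset (Finset α))) + c := by
    conv_lhs => rw [← tsub_add_cancel_of_le hR]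
    rw [hadd, hcopies]
  -- the map part
  have hmem : ∀ k : Fin c, (({x,y} : Finset α) ⊆ I \ P k) ↔ (k ≠ i ∧ k ≠ j) := by
    intro k
    constructor
    · intro h
      constructor
      · rintro rfl
        have := h (by simp : x ∈ ({x,y} : Finset α))
        simp [hx] at this
      · rintro rfl
        have := h (by simp : y ∈ ({x,y} : Finset α))
        simp [hy] at this
    · rintro ⟨hki, hkj⟩ a ha
      simp at ha
      rcases ha with rfl | rfl
      · simp only [Finset.mem_sdiff]
        exact ⟨hxI, fun hmem => Finset.disjoint_left.mp (hPdisj k i hki) hmem hx⟩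
      · simp only [Finset.mem_sdiff]
        exact ⟨hyI, fun hmem => Finset.disjoint_left.mp (hPdisj k j hkj) hmem hy⟩
  have hmap : supp {x,y} (Finset.univ.val.map fun k : Fin c => I \ P k) = c - 2 := by
    rw [supp, Multiset.filter_map, Multiset.card_map]
    simp only [Function.comp]
    have : (Finset.univ.val.filter fun k : Fin c => ({x,y} : Finset α) ⊆ I \ P k)
        = (Finset.univ.filter fun k : Fin c => k ≠ i ∧ k ≠ j).val := by
      simp only [Finset.filter_val]
      exact Multiset.filter_congr (fun k _ => by simpa using hmem k)
    rw [this, ← Finset.card_def]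
    have : (Finset.univ.filter fun k : Fin c => k ≠ i ∧ k ≠ j) = Finset.univ \ {i, j} := by
      ext k; simp [and_comm]
    rw [this, Finset.card_sdiff]
    simp [Finset.card_insert_of_notMem, hij]
  -- the ghost part
  have hghostsupp : supp {x,y} ({L₁, L₂} : Multiset (Finset α)) = 1 := by
    have hdisj : ∀ a, a ∈ L₁ → a ∉ L₂ := by
      intro a h1 h2
      have : a ∈ L₁ ∩ L₂ := Finset.mem_inter.mpr ⟨h1, h2⟩
      simp [hLdisj] at this
    rcases hghost with ⟨hx1, hy1⟩ | ⟨hx2, hy2⟩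
    · have h1 : ({x,y} : Finset α) ⊆ L₁ := by
        intro a ha; simp at ha; rcases ha with rfl | rfl <;> assumption
      have h2 : ¬ ({x,y} : Finset α) ⊆ L₂ := fun h =>
        hdisj x hx1 (h (by simp))
      simp [supp, Multiset.filter_cons, Multiset.filter_singleton, h1, h2]
    · have h2 : ({x,y} : Finset α) ⊆ L₂ := by
        intro a ha; simp at ha; rcases ha with rfl | rfl <;> assumption
      have h1 : ¬ ({x,y} : Finset α) ⊆ L₁ := fun h =>
        hdisj x (h (by simp)) hx2
      simp [supp, Multiset.filter_cons, Multiset.filter_singleton, h1, h2]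
  have hc2 : 2 ≤ c := by
    have h1 : 1 < Fintype.card (Fin c) := Fintype.one_lt_card_iff_nontrivial.mpr ⟨⟨i, j, hij⟩⟩
    simp at h1; omega
  rw [hR', hadd, hadd, hmap, hghostsupp, hRdec]
  omega
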